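/- Let A be an n×m matrix, T and Δ disjoint index sets with δ_{|T|} < 1. Define β_T = −(A_T'A_T)^{-1} A_T'(A_Δ x_Δ + w). Then ||β_T||^2 ≤ 2 θ_{|T|,|Δ|}^2/(1−δ_{|T|})^2 · ||x_Δ||^2 + 2/(1−δ_{|T|}) · ||w||^2. -/

import Mathlib

open Matrix in
private lemma quadform_eq {n m : ℕ} (A : Matrix (Fin n) (Fin m) ℝ) (T : Finset (Fin m))
    (c d : T → ℝ) :
    c ⬝ᵥ (Matrix.of (fun i k : T => ∑ j, A j (i : Fin m) * A j (k : Fin m))).mulVec d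
      = ∑ j, (∑ i : T, A j (i : Fin m) * c i) * (∑ k : T, A j (k : Fin m) * d k) := by
  simp only [dotProduct, Matrix.mulVec, Matrix.of_apply, Finset.mul_sum, Finset.sum_mul]
  rw [Finset.sum_comm]
  simp_rw [Finset.sum_comm (γ := Fin n)]
  exact Finset.sum_congr rfl fun i _ => Finset.sum_congr rfl fun k _ =>
    Finset.sum_congr rfl fun j _ => by ring

private lemma biform_eq {n m : ℕ} (A : Matrix (Fin n) (Fin m) ℝ) (T Δ : Finset (Fin m))
    (c₁ : T → ℝ) (c₂ : Δ → ℝ) :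
    ∑ i : T, c₁ i * ∑ k : Δ, (∑ j, A j (i : Fin m) * A j (k : Fin m)) * c₂ k
      = ∑ j, (∑ i : T, A j (i : Fin m) * c₁ i) * (∑ k : Δ, A j (k : Fin m) * c₂ k) := by
  simp only [Finset.mul_sum, Finset.sum_mul]
  rw [Finset.sum_comm]
  simp_rw [Finset.sum_comm (γ := Fin n)]
  exact Finset.sum_congr rfl fun i _ => Finset.sum_congr rfl fun k _ =>
    Finset.sum_congr rfl fun j _ => by ring

private lemma arith_wrap (δ θ b2 X2 W2 q : ℝ) (hu : 0 < 1 - δ) (hθ : 0 ≤ θ)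
    (hb20 : 0 ≤ b2) (hX20 : 0 ≤ X2) (hW20 : 0 ≤ W2) (hq0 : 0 ≤ q)
    (hRIPβ : (1 - δ) * b2 ≤ q)
    (hq : q ≤ θ * Real.sqrt b2 * Real.sqrt X2 + Real.sqrt q * Real.sqrt W2) :
    b2 ≤ 2 * θ ^ 2 / (1 - δ) ^ 2 * X2 + 2 / (1 - δ) * W2 := by
  set r := Real.sqrt (1 - δ) with hrdef
  set sb := Real.sqrt b2 with hsbdef
  set sX := Real.sqrt X2 with hsXdef
  set sW := Real.sqrt W2 with hsWdef
  set t := Real.sqrt q with htdef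
  have hr0 : 0 < r := Real.sqrt_pos.mpr hu
  have hr2 : r ^ 2 = 1 - δ := Real.sq_sqrt hu.le
  have hsb2 : sb ^ 2 = b2 := Real.sq_sqrt hb20
  have hsX2 : sX ^ 2 = X2 := Real.sq_sqrt hX20
  have hsW2 : sW ^ 2 = W2 := Real.sq_sqrt hW20
  have ht2 : t ^ 2 = q := Real.sq_sqrt hq0
  have hsb0 : 0 ≤ sb := Real.sqrt_nonneg _
  have hsX0 : 0 ≤ sX := Real.sqrt_nonneg _
  have hsW0 : 0 ≤ sW := Real.sqrt_nonneg _
  have ht0 : 0 ≤ t := Real.sqrt_nonneg _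
  clear_value r sb sX sW t
  have f2 : t ^ 2 ≤ θ * sb * sX + t * sW := by rw [ht2]; exact hq
  have f1 : r * sb ≤ t := by
    have h1 : (r * sb) ^ 2 ≤ t ^ 2 := by
      rw [mul_pow, hr2, hsb2, ht2]; exact hRIPβ
    nlinarith [mul_nonneg hr0.le hsb0, ht0]
  have hgoalform : 2 * θ ^ 2 / (1 - δ) ^ 2 * X2 + 2 / (1 - δ) * W2
      = (2 * θ ^ 2 * X2 + 2 * (1 - δ) * W2) / (1 - δ) ^ 2 := by
    field_simp
  rw [hgoalform, le_div_iff₀ (pow_pos hu 2)]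
  rcases eq_or_lt_of_le ht0 with htz | htpos
  · rw [← htz] at f1
    have hb2le : b2 ≤ 0 := by nlinarith [mul_nonneg hsb0 hsb0, hr0, hsb2, hsb0, f1]
    have h1 : b2 * (1 - δ) ^ 2 ≤ 0 := by nlinarith [sq_nonneg (1 - δ)]
    have h2 : (0:ℝ) ≤ 2 * θ ^ 2 * X2 := by positivity
    have h3 : (0:ℝ) ≤ 2 * (1 - δ) * W2 := mul_nonneg (by linarith) hW20
    linarith
  · have f3 : r * t ≤ θ * sX + r * sW := by
      refine le_of_mul_le_mul_right ?_ htpos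
      have h1 := mul_le_mul_of_nonneg_left f2 hr0.le
      have h2 : θ * (r * sb) * sX ≤ θ * t * sX :=
        mul_le_mul_of_nonneg_right (mul_le_mul_of_nonneg_left f1 hθ) hsX0
      linarith [h1, h2]
    have e1 : (r * sb) ^ 2 ≤ t ^ 2 := by
      rw [mul_pow, hr2, hsb2, ht2]; exact hRIPβ
    have e2 : (r * t) ^ 2 ≤ (θ * sX + r * sW) ^ 2 :=
      pow_le_pow_left₀ (mul_nonneg hr0.le ht0) f3 2
    have key : b2 * (1 - δ) ^ 2 ≤ 2 * θ ^ 2 * X2 + 2 * (1 - δ) * W2 := by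
      have e3 := mul_le_mul_of_nonneg_left e1 (sq_nonneg r)
      rw [← hsb2, ← hsX2, ← hsW2, ← hr2]
      linarith [e3, e2, sq_nonneg (θ * sX - r * sW)]
    linarith

/-- Bound on the "compressible" part β_T = -(A_T'A_T)⁻¹ A_T'(A_Δ x_Δ + w). -/
theorem stmt_6 {n m : ℕ} (A : Matrix (Fin n) (Fin m) ℝ)
    (T Δ : Finset (Fin m)) (hdisj : Disjoint T Δ)
    (x : Fin m → ℝ) (w : Fin n → ℝ) (δ θ : ℝ) (hδ : δ < 1) (hδ0 : 0 ≤ δ) (hθ : 0 ≤ θ)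
    -- δ is (an upper bound on) the restricted isometry constant of order |T|
    (hRIP : ∀ c : Fin m → ℝ, (∀ i, c i ≠ 0 → i ∈ T) →
      (1 - δ) * ∑ i, (c i) ^ 2 ≤ ∑ j, (∑ i, A j i * c i) ^ 2 ∧
      ∑ j, (∑ i, A j i * c i) ^ 2 ≤ (1 + δ) * ∑ i, (c i) ^ 2)
    -- θ is (an upper bound on) the restricted orthogonality constant for (|T|,|Δ|)
    (hRO : ∀ (c₁ : T → ℝ) (c₂ : Δ → ℝ),
      |∑ i : T, c₁ i * ∑ k : Δ, (∑ j, A j (i : Fin m) * A j (k : Fin m)) * c₂ k|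
        ≤ θ * Real.sqrt (∑ i, (c₁ i) ^ 2) * Real.sqrt (∑ k, (c₂ k) ^ 2))
    (β : T → ℝ)
    (hβ : β = -(Matrix.of (fun i k : T => ∑ j, A j (i : Fin m) * A j (k : Fin m)))⁻¹.mulVec
      (fun i : T => ∑ j, A j (i : Fin m) * ((∑ k ∈ Δ, A j k * x k) + w j))) :
    ∑ i, (β i) ^ 2 ≤
      2 * θ ^ 2 / (1 - δ) ^ 2 * ∑ k ∈ Δ, (x k) ^ 2 + 2 / (1 - δ) * ∑ j, (w j) ^ 2 := by
  classical
  have hu : (0:ℝ) < 1 - δ := by linarith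
  set G : Matrix T T ℝ :=
    Matrix.of (fun i k : T => ∑ j, A j (i : Fin m) * A j (k : Fin m)) with hGdef
  set v : T → ℝ :=
    (fun i : T => ∑ j, A j (i : Fin m) * ((∑ k ∈ Δ, A j k * x k) + w j)) with hvdef
  -- extension by zero
  let e : (T → ℝ) → (Fin m → ℝ) := fun c i => if h : i ∈ T then c ⟨i, h⟩ else 0
  have he_mem : ∀ (c : T → ℝ) (i : T), e c (i : Fin m) = c i := fun c i => dif_pos i.2
  have he_sum : ∀ (c : T → ℝ) (f : Fin m → ℝ),
      ∑ i, f i * e c i = ∑ i : T, f (i : Fin m) * c i := by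
    intro c f
    rw [show (∑ i, f i * e c i) = ∑ i ∈ T, f i * e c i by
      refine (Finset.sum_subset (Finset.subset_univ T) fun i _ hi => ?_).symm
      simp [e, dif_neg hi]]
    rw [← Finset.sum_attach T (fun i => f i * e c i), Finset.univ_eq_attach]
    exact Finset.sum_congr rfl fun i _ => by rw [he_mem]
  have he_sq : ∀ c : T → ℝ, ∑ i, (e c i) ^ 2 = ∑ i : T, (c i) ^ 2 := by
    intro c
    have := he_sum c (e c)
    simpa [sq, he_mem] using this
  -- main quantities
  set u : Fin n → ℝ := fun j => ∑ i : T, A j (i : Fin m) * β i with hudef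
  set q : ℝ := ∑ j, (u j) ^ 2 with hqdef
  set b2 : ℝ := ∑ i : T, (β i) ^ 2 with hb2def
  set X2 : ℝ := ∑ k ∈ Δ, (x k) ^ 2 with hX2def
  set W2 : ℝ := ∑ j, (w j) ^ 2 with hW2def
  have hq0 : 0 ≤ q := Finset.sum_nonneg fun j _ => sq_nonneg _
  have hb20 : 0 ≤ b2 := Finset.sum_nonneg fun i _ => sq_nonneg _
  have hX20 : 0 ≤ X2 := Finset.sum_nonneg fun k _ => sq_nonneg _
  have hW20 : 0 ≤ W2 := Finset.sum_nonneg fun j _ => sq_nonneg _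
  -- RIP for extended vectors
  have hRIP' : ∀ c : T → ℝ,
      (1 - δ) * ∑ i : T, (c i) ^ 2 ≤ ∑ j, (∑ i : T, A j (i : Fin m) * c i) ^ 2 := by
    intro c
    have hsupp : ∀ i, e c i ≠ 0 → i ∈ T := by
      intro i hi
      by_contra h
      exact hi (dif_neg h)
    have h := (hRIP (e c) hsupp).1
    rw [he_sq] at h
    calc (1 - δ) * ∑ i : T, (c i) ^ 2 ≤ ∑ j, (∑ i, A j i * e c i) ^ 2 := h
      _ = ∑ j, (∑ i : T, A j (i : Fin m) * c i) ^ 2 :=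
          Finset.sum_congr rfl fun j _ => by rw [he_sum]
  -- RIP bound for β
  have hRIPβ : (1 - δ) * b2 ≤ q := hRIP' β
  -- G is invertible
  have hGunit : IsUnit G := by
    rw [← Matrix.mulVec_injective_iff_isUnit]
    intro c d hcd
    have hzero : G.mulVec (c - d) = 0 := by
      rw [Matrix.mulVec_sub, hcd, sub_self]
    have hqf : dotProduct (c - d) (G.mulVec (c - d)) = 0 := by
      rw [hzero, dotProduct_zero]
    have hle := hRIP' (c - d)
    simp only [pow_two] at hle
    rw [← quadform_eq A T (c - d) (c - d), ← hGdef, hqf] at hle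
    have hS0 : (0:ℝ) ≤ ∑ i : T, (c - d) i * (c - d) i :=
      Finset.sum_nonneg fun i _ => mul_self_nonneg _
    have hsum0 : ∑ i : T, ((c - d) i) ^ 2 = 0 :=
      le_antisymm (by simp only [pow_two]; nlinarith) (Finset.sum_nonneg fun i _ => sq_nonneg _)
    have hz : ∀ i : T, (c - d) i = 0 := by
      intro i
      have h := (Finset.sum_eq_zero_iff_of_nonneg
        (fun i _ => sq_nonneg ((c - d) i))).mp hsum0 i (Finset.mem_univ i)
      exact sq_eq_zero_iff.mp h
    have : c - d = 0 := funext hz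
    exact sub_eq_zero.mp this
  have hGβ : G.mulVec β = -v := by
    rw [hβ, Matrix.mulVec_neg, Matrix.mulVec_mulVec,
      Matrix.mul_nonsing_inv G ((Matrix.isUnit_iff_isUnit_det G).mp hGunit), Matrix.one_mulVec]
  -- q = β' G β
  have hqG : q = dotProduct β (G.mulVec β) := by
    rw [hGdef, quadform_eq A T β β]
    exact Finset.sum_congr rfl fun j _ => by rw [sq]
  -- q = -(P + Q)
  set P : ℝ := ∑ j, u j * (∑ k ∈ Δ, A j k * x k) with hPdef
  set Q : ℝ := ∑ j, u j * w j with hQdef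
  have hβv : dotProduct β v = P + Q := by
    have hswap : dotProduct β v
        = ∑ j, u j * ((∑ k ∈ Δ, A j k * x k) + w j) := by
      simp only [dotProduct, hvdef]
      simp only [Finset.mul_sum]
      rw [Finset.sum_comm]
      refine Finset.sum_congr rfl fun j _ => ?_
      simp only [hudef]
      rw [Finset.sum_mul]
      exact Finset.sum_congr rfl fun i _ => by ring
    rw [hswap, hPdef, hQdef, ← Finset.sum_add_distrib]
    exact Finset.sum_congr rfl fun j _ => by ring
  have hqPQ : q = -(P + Q) := by
    rw [hqG, hGβ, dotProduct_neg, hβv]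
  -- RO bound on P
  have hP : |P| ≤ θ * Real.sqrt b2 * Real.sqrt X2 := by
    have h := hRO β (fun k : Δ => x (k : Fin m))
    rw [biform_eq A T Δ β (fun k : Δ => x (k : Fin m))] at h
    have hx2 : ∑ k : Δ, (x (k : Fin m)) ^ 2 = X2 := Finset.sum_coe_sort Δ (fun k => (x k) ^ 2)
    rw [hx2] at h
    have hPe : P = ∑ j, (∑ i : T, A j (i : Fin m) * β i) * (∑ k : Δ, A j (k : Fin m) * x k) := by
      rw [hPdef]
      refine Finset.sum_congr rfl fun j _ => ?_
      rw [hudef, Finset.sum_coe_sort Δ (fun k => A j k * x k)]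
    rw [← hb2def] at h
    rw [hPe]
    exact h
  -- Cauchy-Schwarz bound on Q
  have hQ : |Q| ≤ Real.sqrt q * Real.sqrt W2 := by
    have h2 : Q ^ 2 ≤ q * W2 := Finset.sum_mul_sq_le_sq_mul_sq _ _ _
    calc |Q| = Real.sqrt (Q ^ 2) := (Real.sqrt_sq_eq_abs Q).symm
      _ ≤ Real.sqrt (q * W2) := Real.sqrt_le_sqrt h2
      _ = Real.sqrt q * Real.sqrt W2 := Real.sqrt_mul hq0 _
  refine arith_wrap δ θ b2 X2 W2 q hu hθ hb20 hX20 hW20 hq0 hRIPβ ?_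
  calc q = -(P + Q) := hqPQ
    _ ≤ |P| + |Q| := by
        calc -(P + Q) ≤ |-(P + Q)| := le_abs_self _
          _ = |P + Q| := abs_neg _
          _ ≤ |P| + |Q| := abs_add_le _ _
    _ ≤ θ * Real.sqrt b2 * Real.sqrt X2 + Real.sqrt q * Real.sqrt W2 := add_le_add hP hQ
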